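/- Let X ∈ R^{d×p} with d = d1·d2·…·dL and p = p1·p2·…·pL, and let B_l ∈ R^{d_l×p_l} for l = 1,…,L. Then ⟨X, B_L ⊗ B_{L-1} ⊗ … ⊗ B_1⟩ = ((…((X * B_1) * B_2) …) * B_{L-1}) * B_L, where * denotes non-overlapping convolution (with stride equal to kernel size) and the final result is a 1×1 matrix identified with a scalar. -/
import Mathlib


/-- The L-fold Kronecker product B_L ⊗ … ⊗ B_1, realized as a matrix indexed by the
product of the index sets (coordinate k corresponds to factor B_k). -/
def kronFold {L : ℕ} {m n : Fin L → Type} [∀ k, Fintype (m k)] [∀ k, Fintype (n k)]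
    (B : ∀ k, Matrix (m k) (n k) ℝ) : Matrix (∀ k, m k) (∀ k, n k) ℝ :=
  fun i j => ∏ k, B k (i k) (j k)

/-- Frobenius inner product. -/
noncomputable def fro {m n : Type} [Fintype m] [Fintype n] (A B : Matrix m n ℝ) : ℝ :=
  ∑ i, ∑ j, A i j * B i j

/-- One non-overlapping convolution step X * B₁: contract the first coordinate
(i.e. the blocks of size d₁×p₁) of X against B₁. -/
noncomputable def convStep {L : ℕ} {m n : Fin (L + 1) → Type}
    [∀ k, Fintype (m k)] [∀ k, Fintype (n k)]
    (X : Matrix (∀ k, m k) (∀ k, n k) ℝ) (B : Matrix (m 0) (n 0) ℝ) :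
    Matrix (∀ k : Fin L, m k.succ) (∀ k : Fin L, n k.succ) ℝ :=
  fun i j => ∑ a, ∑ b, X (Fin.cons a i) (Fin.cons b j) * B a b

/-- The iterated non-overlapping convolution ((…((X*B_1)*B_2)…)*B_{L-1})*B_L,
a scalar once all coordinates are contracted. -/
noncomputable def convIter : ∀ {L : ℕ} {m n : Fin L → Type}
    [inst1 : ∀ k, Fintype (m k)] [inst2 : ∀ k, Fintype (n k)],
    Matrix (∀ k, m k) (∀ k, n k) ℝ → (∀ k, Matrix (m k) (n k) ℝ) → ℝ
  | 0, _, _, _, _, X, _ => X finZeroElim finZeroElim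
  | _ + 1, _, _, _, _, X, B => convIter (convStep X (B 0)) fun k => B k.succ


set_option maxRecDepth 8000

lemma swap4 {α β γ δ : Type*} [Fintype α] [Fintype β] [Fintype γ] [Fintype δ]
    (f : α → β → γ → δ → ℝ) :
    ∑ a, ∑ i, ∑ b, ∑ j, f a i b j = ∑ i, ∑ j, ∑ a, ∑ b, f a i b j := by
  rw [Finset.sum_comm]
  refine Finset.sum_congr rfl fun i _ => ?_
  rw [show (∑ a, ∑ b, ∑ j, f a i b j) = ∑ a, ∑ j, ∑ b, f a i b j from
    Finset.sum_congr rfl fun a _ => Finset.sum_comm, Finset.sum_comm]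

lemma key : ∀ {L : ℕ} {m n : Fin L → Type} [∀ k, Fintype (m k)] [∀ k, Fintype (n k)]
    (X : Matrix (∀ k, m k) (∀ k, n k) ℝ) (B : ∀ k, Matrix (m k) (n k) ℝ),
    fro X (kronFold B) = convIter X B
  | 0, m, n, _, _, X, B => by
    have h1 : ∀ i : ∀ k : Fin 0, m k, i = finZeroElim := fun i => funext fun k => k.elim0
    have h2 : ∀ j : ∀ k : Fin 0, n k, j = finZeroElim := fun j => funext fun k => k.elim0
    simp [fro, kronFold, convIter]
    rw [h1 default, h2 default]
  | L + 1, m, n, _, _, X, B => by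
    rw [show convIter X B = convIter (convStep X (B 0)) (fun k => B k.succ) from rfl,
      ← key (convStep X (B 0)) (fun k => B k.succ)]
    have hm : ∀ g : (∀ k, m k) → ℝ, ∑ i, g i = ∑ a, ∑ i', g (Fin.cons a i') := fun g => by
      rw [← Equiv.sum_comp (Fin.consEquiv m) g, Fintype.sum_prod_type]; rfl
    have hn : ∀ g : (∀ k, n k) → ℝ, ∑ j, g j = ∑ b, ∑ j', g (Fin.cons b j') := fun g => by
      rw [← Equiv.sum_comp (Fin.consEquiv n) g, Fintype.sum_prod_type]; rfl
    simp only [fro, kronFold, convStep, Finset.sum_mul]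
    rw [hm]
    simp_rw [hn]
    rw [swap4]
    refine Finset.sum_congr rfl fun i _ => Finset.sum_congr rfl fun j _ =>
      Finset.sum_congr rfl fun a _ => Finset.sum_congr rfl fun b _ => ?_
    rw [Fin.prod_univ_succ]
    simp only [Fin.cons_zero, Fin.cons_succ]
    ring

/-- ⟨X, B_L ⊗ … ⊗ B_1⟩ equals the iterated non-overlapping convolution
((…((X*B_1)*B_2)…)*B_{L-1})*B_L. -/
theorem stmt_10 {L : ℕ} {m n : Fin L → Type} [∀ k, Fintype (m k)] [∀ k, Fintype (n k)]
    (X : Matrix (∀ k, m k) (∀ k, n k) ℝ) (B : ∀ k, Matrix (m k) (n k) ℝ) :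
    fro X (kronFold B) = convIter X B := key X B
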